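/- Let M be an infinite subset of ℕ, n ≥ 1 and ε > 0. Then there exists k ∈ ℕ such that for every finite subset F of M that is a maximal member of the Schreier family S_n (i.e., F ∈ S_n, and F ∪ {m} ∉ S_n for every m ∈ ℕ with m > max F) and satisfies k ≤ min F, there exists an (n,ε)-basic special convex combination x ∈ c_00(ℕ) with supp x = F. -/

import Mathlib

/-- `E < F` for finite sets of naturals: every element of `E` is less than
every element of `F` (vacuously true if one of them is empty). -/
def FinsetLT (E F : Finset ℕ) : Prop := ∀ a ∈ E, ∀ b ∈ F, a < b

/-- The convolution `M * N` of two families of finite subsets of `ℕ`: it consists of `∅`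
together with all unions `E₁ ∪ … ∪ E_k` where `E₁ < … < E_k` are nonempty sets in `N`
and `{min E₁, …, min E_k} ∈ M`. -/
def SchreierConv (M N : Set (Finset ℕ)) : Set (Finset ℕ) :=
  {E | E = ∅ ∨ ∃ (k : ℕ) (Es : Fin k → Finset ℕ),
    (∀ i, Es i ∈ N) ∧ (∀ i, (Es i).Nonempty) ∧
    (∀ i j : Fin k, i < j → FinsetLT (Es i) (Es j)) ∧
    (Finset.image (fun i => sInf (↑(Es i) : Set ℕ)) Finset.univ) ∈ M ∧
    E = Finset.univ.biUnion Es}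

/-- The first Schreier family `S₁ = {E : #E ≤ min E} ∪ {∅}`. -/
def SchreierOne : Set (Finset ℕ) := {E | ∀ k ∈ E, E.card ≤ k}

/-- The Schreier families: `S₀` = singletons and `∅`, `S₁` as above,
`S_{n+1} = S₁ * S_n`. -/
def Schreier : ℕ → Set (Finset ℕ)
  | 0 => {E | E.card ≤ 1}
  | 1 => SchreierOne
  | n + 2 => SchreierConv SchreierOne (Schreier (n + 1))

/-- An `(n, ε)`-basic special convex combination: a convex combination `x` of the unit
vector basis of `c₀₀(ℕ)` with `supp x ∈ S_n` and `∑_{k ∈ G} x(k) < ε` for every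
`G ⊆ supp x` with `G ∈ S_{n-1}`. -/
def IsBSCCVec (n : ℕ) (ε : ℝ) (x : ℕ →₀ ℝ) : Prop :=
  (∀ k, 0 ≤ x k) ∧ (∑ k ∈ x.support, x k) = 1 ∧ x.support ∈ Schreier n ∧
  ∀ G ⊆ x.support, G ∈ Schreier (n - 1) → ∑ k ∈ G, x k < ε

namespace SchAux

lemma sInf_mem' {F : Finset ℕ} (h : F.Nonempty) : sInf (↑F : Set ℕ) ∈ F := by
  have := Nat.sInf_mem (s := (↑F : Set ℕ)) (by exact h.to_set)
  exact_mod_cast this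

lemma sInf_le' {F : Finset ℕ} {a : ℕ} (h : a ∈ F) : sInf (↑F : Set ℕ) ≤ a :=
  Nat.sInf_le (by exact_mod_cast h)

lemma sInf_mono' {B F : Finset ℕ} (hs : B ⊆ F) (h : B.Nonempty) :
    sInf (↑F : Set ℕ) ≤ sInf (↑B : Set ℕ) := sInf_le' (hs (sInf_mem' h))

def unionL (L : List (Finset ℕ)) : Finset ℕ := L.foldr (· ∪ ·) ∅

@[simp] lemma unionL_nil : unionL [] = ∅ := rfl
@[simp] lemma unionL_cons (B : Finset ℕ) (L : List (Finset ℕ)) :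
    unionL (B :: L) = B ∪ unionL L := rfl

lemma mem_unionL {L : List (Finset ℕ)} {a : ℕ} : a ∈ unionL L ↔ ∃ B ∈ L, a ∈ B := by
  induction L with
  | nil => simp
  | cons B Bs ih => simp [ih]

lemma unionL_append (L₁ L₂ : List (Finset ℕ)) :
    unionL (L₁ ++ L₂) = unionL L₁ ∪ unionL L₂ := by
  induction L₁ with
  | nil => simp
  | cons B Bs ih => simp [ih, Finset.union_assoc]

lemma card_unionL_le (L : List (Finset ℕ)) :
    (unionL L).card ≤ (L.map Finset.card).sum := by
  induction L with
  | nil => simp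
  | cons B Bs ih =>
      simp only [unionL_cons, List.map_cons, List.sum_cons]
      exact le_trans (Finset.card_union_le _ _) (by omega)

def Decomp (ν : ℕ) (L : List (Finset ℕ)) (F : Finset ℕ) : Prop :=
  (∀ B ∈ L, B ∈ Schreier ν ∧ B.Nonempty) ∧ L.Pairwise FinsetLT ∧ unionL L = F

lemma Decomp.subset {ν : ℕ} {L : List (Finset ℕ)} {F B : Finset ℕ} (hd : Decomp ν L F)
    (hB : B ∈ L) : B ⊆ F := by
  intro a ha
  rw [← hd.2.2]
  exact mem_unionL.2 ⟨B, hB, ha⟩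

lemma schreier_iff {n : ℕ} (hn : 1 ≤ n) {F : Finset ℕ} :
    F ∈ Schreier n ↔ F = ∅ ∨ ∃ L, Decomp (n - 1) L F ∧ L.length ≤ sInf (↑F : Set ℕ) := by
  match n, hn with
  | 1, _ =>
    constructor
    · intro hF
      rcases F.eq_empty_or_nonempty with h | h
      · exact Or.inl h
      refine Or.inr ⟨(F.sort (· ≤ ·)).map (fun a => {a}), ⟨?_, ?_, ?_⟩, ?_⟩
      · intro B hB
        simp only [List.mem_map] at hB
        obtain ⟨a, _, rfl⟩ := hB
        exact ⟨by simp [Schreier], Finset.singleton_nonempty a⟩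
      · rw [List.pairwise_map]
        exact (Finset.sortedLT_sort F).pairwise.imp (fun {a b} hab => by
          intro x hx y hy
          simp only [Finset.mem_singleton] at hx hy
          omega)
      · ext a
        simp [mem_unionL]
      · simp only [List.length_map, Finset.length_sort]
        exact hF _ (sInf_mem' h)
    · rintro (rfl | ⟨L, ⟨hBs, _, hU⟩, hlen⟩)
      · intro k hk; simp at hk
      intro k hk
      have hcard : F.card ≤ L.length := by
        rw [← hU]
        refine le_trans (card_unionL_le L) ?_
        have : ∀ c ∈ L.map Finset.card, c ≤ 1 := by
          intro c hc
          simp only [List.mem_map] at hc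
          obtain ⟨B, hB, rfl⟩ := hc
          exact (hBs B hB).1
        calc (L.map Finset.card).sum ≤ (L.map Finset.card).length * 1 :=
              List.sum_le_card_nsmul _ 1 this
          _ = L.length := by simp
      exact le_trans hcard (le_trans hlen (sInf_le' hk))
  | (m + 2), _ =>
    show F ∈ SchreierConv SchreierOne (Schreier (m + 1)) ↔ _
    constructor
    · rintro (rfl | ⟨k, Es, hmem, hne, hlt, hmins, rfl⟩)
      · exact Or.inl rfl
      rcases eq_or_ne k 0 with rfl | hk0
      · left; ext a; simp
      right
      set F := Finset.univ.biUnion Es with hFdef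
      have hFne : F.Nonempty := by
        obtain ⟨i⟩ := Fin.pos_iff_nonempty.1 (Nat.pos_of_ne_zero hk0)
        obtain ⟨a, ha⟩ := hne i
        exact ⟨a, Finset.mem_biUnion.2 ⟨i, Finset.mem_univ i, ha⟩⟩
      refine ⟨List.ofFn Es, ⟨?_, ?_, ?_⟩, ?_⟩
      · intro B hB
        obtain ⟨i, rfl⟩ := List.mem_ofFn.1 hB
        exact ⟨hmem i, hne i⟩
      · exact List.pairwise_ofFn.2 hlt
      · ext a
        simp only [mem_unionL, Finset.mem_biUnion, Finset.mem_univ, true_and, hFdef]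
        constructor
        · rintro ⟨B, hB, ha⟩
          obtain ⟨i, rfl⟩ := List.mem_ofFn.1 hB
          exact ⟨i, ha⟩
        · rintro ⟨i, ha⟩
          exact ⟨Es i, List.mem_ofFn.2 ⟨i, rfl⟩, ha⟩
      · rw [List.length_ofFn]
        obtain ⟨i, hi⟩ := Finset.mem_biUnion.1 (sInf_mem' hFne)
        have h1 : k ≤ sInf (↑(Es i) : Set ℕ) := by
          have hinj : Function.Injective (fun i => sInf (↑(Es i) : Set ℕ)) := by
            intro i j hij
            have hij' : sInf (↑(Es i) : Set ℕ) = sInf (↑(Es j) : Set ℕ) := hij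
            by_contra hne'
            rcases lt_or_gt_of_ne (fun h : i = j => hne' h) with h | h
            · have := hlt i j h _ (sInf_mem' (hne i)) _ (sInf_mem' (hne j))
              omega
            · have := hlt j i h _ (sInf_mem' (hne j)) _ (sInf_mem' (hne i))
              omega
          have hc : (Finset.image (fun i => sInf (↑(Es i) : Set ℕ)) Finset.univ).card = k := by
            rw [Finset.card_image_of_injective _ hinj, Finset.card_univ, Fintype.card_fin]
          have := hmins _ (Finset.mem_image_of_mem _ (Finset.mem_univ i))
          rw [hc] at this
          exact this
        exact le_trans h1 (sInf_le' hi.2)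
    · rintro (rfl | ⟨L, ⟨hBs, hpw, hU⟩, hlen⟩)
      · exact Or.inl rfl
      right
      refine ⟨L.length, fun i => L.get i, fun i => (hBs _ (L.get_mem i)).1,
        fun i => (hBs _ (L.get_mem i)).2, List.pairwise_iff_get.1 hpw, ?_, ?_⟩
      · intro v hv
        simp only [Finset.mem_image, Finset.mem_univ, true_and] at hv
        obtain ⟨i, rfl⟩ := hv
        have h1 : (Finset.image (fun i : Fin L.length => sInf (↑(L.get i) : Set ℕ))
            Finset.univ).card ≤ L.length := by
          exact le_trans (Finset.card_image_le) (by simp)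
        have h2 : sInf (↑F : Set ℕ) ≤ sInf (↑(L.get i) : Set ℕ) := by
          refine sInf_mono' ?_ ((hBs _ (L.get_mem i)).2)
          exact Decomp.subset ⟨hBs, hpw, hU⟩ (L.get_mem i)
        exact le_trans h1 (le_trans hlen h2)
      · ext a
        rw [← hU]
        simp only [mem_unionL, Finset.mem_biUnion, Finset.mem_univ, true_and]
        constructor
        · rintro ⟨B, hB, ha⟩
          obtain ⟨i, hi⟩ := List.mem_iff_get.1 hB
          exact ⟨i, hi ▸ ha⟩
        · rintro ⟨i, ha⟩
          exact ⟨L.get i, L.get_mem i, ha⟩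



lemma empty_mem (n : ℕ) : (∅ : Finset ℕ) ∈ Schreier n := by
  match n with
  | 0 => simp [Schreier]
  | 1 => intro k hk; simp at hk
  | m + 2 => exact Or.inl rfl

lemma sInf_singleton' (a : ℕ) : sInf (↑({a} : Finset ℕ) : Set ℕ) = a := by
  have := sInf_mem' (Finset.singleton_nonempty a)
  simpa using this

lemma singleton_mem : ∀ {n a : ℕ}, 1 ≤ a → ({a} : Finset ℕ) ∈ Schreier n
  | 0, a, ha => by simp [Schreier]
  | 1, a, ha => by
      intro k hk
      simp only [Finset.mem_singleton] at hk
      subst hk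
      simpa using ha
  | (m + 2), a, ha => by
      rw [schreier_iff (by omega)]
      refine Or.inr ⟨[{a}], ⟨?_, ?_, ?_⟩, ?_⟩
      · intro B hB
        simp only [List.mem_singleton] at hB
        subst hB
        exact ⟨singleton_mem ha, Finset.singleton_nonempty a⟩
      · simp
      · simp
      · simpa [sInf_singleton'] using ha

lemma decomp_restrict {ν : ℕ}
    (hh : ∀ {G F : Finset ℕ}, G ⊆ F → F ∈ Schreier ν → G ∈ Schreier ν) :
    ∀ {L : List (Finset ℕ)} {S G : Finset ℕ}, Decomp ν L S → G ⊆ S →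
      ∃ L', Decomp ν L' G ∧ L'.length ≤ L.length := by
  intro L
  induction L with
  | nil =>
    intro S G hd hGS
    rw [← hd.2.2] at hGS
    simp only [unionL_nil, Finset.subset_empty] at hGS
    exact ⟨[], ⟨by simp, by simp, by simp [hGS]⟩, le_refl _⟩
  | cons B Bs ih =>
    intro S G hd hGS
    have hdBs : Decomp ν Bs (unionL Bs) :=
      ⟨fun C hC => hd.1 C (List.mem_cons_of_mem _ hC), (List.pairwise_cons.1 hd.2.1).2, rfl⟩
    have hG2 : G \ B ⊆ unionL Bs := by
      intro a ha
      simp only [Finset.mem_sdiff] at ha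
      have := hGS ha.1
      rw [← hd.2.2] at this
      simp only [unionL_cons, Finset.mem_union] at this
      tauto
    obtain ⟨L', hL', hlen⟩ := ih hdBs hG2
    rcases (G ∩ B).eq_empty_or_nonempty with hGB | hGB
    · refine ⟨L', ?_, by simpa using Nat.le_succ_of_le hlen⟩
      have : G \ B = G := by
        rw [Finset.sdiff_eq_self_iff_disjoint, Finset.disjoint_right]
        intro a haB haG
        exact absurd (Finset.mem_inter.2 ⟨haG, haB⟩) (by simp [hGB])
      rwa [this] at hL'
    · refine ⟨(G ∩ B) :: L', ⟨?_, ?_, ?_⟩, by simpa using hlen⟩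
      · rintro C hC
        rcases List.mem_cons.1 hC with rfl | hC
        · exact ⟨hh Finset.inter_subset_right (hd.1 B (by simp)).1, hGB⟩
        · exact hL'.1 C hC
      · refine List.pairwise_cons.2 ⟨?_, hL'.2.1⟩
        intro C hC a ha b hb
        have hCsub : C ⊆ unionL Bs := fun z hz => hG2 (Decomp.subset hL' hC hz)
        have hb' := hCsub hb
        obtain ⟨D, hD, hbD⟩ := mem_unionL.1 hb'
        exact (List.pairwise_cons.1 hd.2.1).1 D hD a (Finset.mem_inter.1 ha).2 b hbD
      · rw [unionL_cons, hL'.2.2]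
        ext a
        simp only [Finset.mem_union, Finset.mem_inter, Finset.mem_sdiff]
        tauto

lemma hered : ∀ n, ∀ {G F : Finset ℕ}, G ⊆ F → F ∈ Schreier n → G ∈ Schreier n
  | 0, G, F, hGF, hF => le_trans (Finset.card_le_card hGF) hF
  | 1, G, F, hGF, hF => fun k hk => le_trans (Finset.card_le_card hGF) (hF k (hGF hk))
  | (m + 2), G, F, hGF, hF => by
      rcases G.eq_empty_or_nonempty with rfl | hG
      · exact empty_mem _
      have hFne : F.Nonempty := hG.mono hGF
      rw [schreier_iff (by omega)] at hF ⊢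
      rcases hF with rfl | ⟨L, hL, hlen⟩
      · simp at hFne
      obtain ⟨L', hL', hlen'⟩ := decomp_restrict (fun {G' F'} h1 h2 => hered (m + 1) h1 h2) hL hGF
      refine Or.inr ⟨L', hL', le_trans hlen' (le_trans hlen ?_)⟩
      exact sInf_mono' hGF hG

lemma mem_pos {n : ℕ} (hn : 1 ≤ n) {F : Finset ℕ} (hF : F ∈ Schreier n) {a : ℕ}
    (ha : a ∈ F) : 1 ≤ a := by
  have h1 : ({a} : Finset ℕ) ∈ Schreier n := hered n (by simpa using ha) hF
  rw [schreier_iff hn] at h1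
  rcases h1 with h | ⟨L, hL, hlen⟩
  · simp at h
  have : L ≠ [] := by
    rintro rfl
    have := hL.2.2
    simp only [unionL_nil] at this
    exact absurd this.symm (by simp)
  have h2 : 1 ≤ L.length := List.length_pos_iff.2 this
  rw [sInf_singleton'] at hlen
  omega

lemma sInf_insert_of_gt {B : Finset ℕ} {x : ℕ} (hB : B.Nonempty) (hx : ∀ a ∈ B, a < x) :
    sInf (↑(insert x B) : Set ℕ) = sInf (↑B : Set ℕ) := by
  apply le_antisymm
  · exact sInf_le' (Finset.mem_insert_of_mem (sInf_mem' hB))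
  · have h1 := sInf_mem' (F := insert x B) ⟨x, Finset.mem_insert_self x B⟩
    rcases Finset.mem_insert.1 h1 with h | h
    · exfalso
      obtain ⟨b, hb⟩ := hB
      have := sInf_le' (F := insert x B) (Finset.mem_insert_of_mem hb)
      have := hx b hb
      omega
    · exact sInf_le' h

lemma endext : ∀ {n : ℕ} {B : Finset ℕ} {x y : ℕ}, B.Nonempty → (∀ a ∈ B, a < x) →
    (∀ a ∈ B, a < y) → 1 ≤ y → insert x B ∈ Schreier n → insert y B ∈ Schreier n
  | 0, B, x, y, hB, hx, hy, hy1, hmem => by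
      exfalso
      obtain ⟨b, hb⟩ := hB
      have hxB : x ∉ B := fun h => absurd (hx x h) (lt_irrefl x)
      have h1 : (insert x B).card = B.card + 1 := Finset.card_insert_of_notMem hxB
      have h2 : 1 ≤ B.card := Finset.card_pos.2 ⟨b, hb⟩
      have h3 : (insert x B).card ≤ 1 := hmem
      omega
  | 1, B, x, y, hB, hx, hy, hy1, hmem => by
      have hxB : x ∉ B := fun h => absurd (hx x h) (lt_irrefl x)
      have hyB : y ∉ B := fun h => absurd (hy y h) (lt_irrefl y)
      have h1 : (insert x B).card = B.card + 1 := Finset.card_insert_of_notMem hxB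
      have h2 : (insert y B).card = B.card + 1 := Finset.card_insert_of_notMem hyB
      intro k hk
      rcases Finset.mem_insert.1 hk with rfl | hkB
      · obtain ⟨b, hb⟩ := hB
        have := hmem b (Finset.mem_insert_of_mem hb)
        have := hy b hb
        omega
      · have := hmem k (Finset.mem_insert_of_mem hkB)
        omega
  | (m + 2), B, x, y, hB, hx, hy, hy1, hmem => by
      have hxB : x ∉ B := fun h => absurd (hx x h) (lt_irrefl x)
      rw [schreier_iff (by omega)] at hmem ⊢
      rcases hmem with h | ⟨L, hL, hlen⟩
      · exact absurd h (by simp)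
      obtain ⟨C, hCL, hxC⟩ := mem_unionL.1 (by rw [hL.2.2]; exact Finset.mem_insert_self x B)
      have hCne : C.Nonempty := (hL.1 C hCL).2
      -- every other block is below C and contained in B
      have othersub : ∀ Z ∈ L, Z ≠ C → FinsetLT Z C ∧ Z ⊆ B := by
        intro Z hZL hZC
        obtain ⟨iZ, hiZ⟩ := List.mem_iff_get.1 hZL
        obtain ⟨iC, hiC⟩ := List.mem_iff_get.1 hCL
        have hne' : iZ ≠ iC := by rintro rfl; rw [hiZ] at hiC; exact hZC hiC
        have hpg := List.pairwise_iff_get.1 hL.2.1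
        have hZltC : FinsetLT Z C := by
          rcases lt_or_gt_of_ne hne' with h | h
          · have := hpg iZ iC h; rwa [hiZ, hiC] at this
          · exfalso
            have hCZ := hpg iC iZ h
            rw [hiZ, hiC] at hCZ
            obtain ⟨z, hz⟩ := (hL.1 Z hZL).2
            have h1 := hCZ x hxC z hz
            have h2 : z ∈ insert x B := by rw [← hL.2.2]; exact mem_unionL.2 ⟨Z, hZL, hz⟩
            rcases Finset.mem_insert.1 h2 with he | h2
            · omega
            · have := hx z h2; omega
        refine ⟨hZltC, fun z hz => ?_⟩
        have h2 : z ∈ insert x B := by rw [← hL.2.2]; exact mem_unionL.2 ⟨Z, hZL, hz⟩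
        rcases Finset.mem_insert.1 h2 with he | h2
        · exact absurd (he ▸ hZltC z hz x hxC) (lt_irrefl x)
        · exact h2
      have hCe : C.erase x ⊆ B := by
        intro a ha
        have h1 := Finset.mem_of_mem_erase ha
        have h2 : a ∈ insert x B := by rw [← hL.2.2]; exact mem_unionL.2 ⟨C, hCL, h1⟩
        rcases Finset.mem_insert.1 h2 with he | h2
        · exact absurd he (Finset.ne_of_mem_erase ha)
        · exact h2
      set D : Finset ℕ := insert y (C.erase x) with hDdef
      have hD : D ∈ Schreier (m + 1) := by
        rcases (C.erase x).eq_empty_or_nonempty with he | he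
        · have : D = {y} := by rw [hDdef, he]; rfl
          rw [this]
          exact singleton_mem hy1
        · have hCeq : insert x (C.erase x) = C := Finset.insert_erase hxC
          refine endext he (fun a ha => hx a (hCe ha)) (fun a ha => hy a (hCe ha)) hy1 ?_
          rw [hCeq]
          exact (hL.1 C hCL).1
      set L' : List (Finset ℕ) := L.map (fun Z => if Z = C then D else Z) with hL'def
      have hmem' : ∀ a, a ∈ unionL L' ↔ ∃ Z ∈ L, a ∈ (if Z = C then D else Z) := by
        intro a
        rw [mem_unionL]
        constructor
        · rintro ⟨B', hB', ha⟩
          obtain ⟨Z, hZ, rfl⟩ := List.mem_map.1 hB'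
          exact ⟨Z, hZ, ha⟩
        · rintro ⟨Z, hZ, ha⟩
          exact ⟨_, List.mem_map_of_mem hZ, ha⟩
      refine Or.inr ⟨L', ⟨?_, ?_, ?_⟩, ?_⟩
      · intro B' hB'
        obtain ⟨Z, hZ, rfl⟩ := List.mem_map.1 hB'
        by_cases h : Z = C
        · simp only [h, if_pos rfl]
          exact ⟨hD, ⟨y, Finset.mem_insert_self y _⟩⟩
        · simp only [if_neg h]
          exact hL.1 Z hZ
      · rw [List.pairwise_map]
        refine List.Pairwise.imp_of_mem ?_ hL.2.1
        intro Z₁ Z₂ h1 h2 hR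
        by_cases e1 : Z₁ = C
        · exfalso
          rw [e1] at hR
          by_cases e2 : Z₂ = C
          · rw [e2] at hR; exact absurd (hR x hxC x hxC) (lt_irrefl x)
          · obtain ⟨z, hz⟩ := (hL.1 Z₂ h2).2
            have := (othersub Z₂ h2 e2).1 z hz x hxC
            have := hR x hxC z hz
            omega
        · by_cases e2 : Z₂ = C
          · simp only [if_neg e1, if_pos e2]
            rw [e2] at hR
            intro a ha b hb
            rcases Finset.mem_insert.1 hb with rfl | hb
            · exact hy a ((othersub Z₁ h1 e1).2 ha)
            · exact hR a ha b (Finset.mem_of_mem_erase hb)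
            
          · simpa only [if_neg e1, if_neg e2] using hR
      · ext a
        rw [hmem']
        constructor
        · rintro ⟨Z, hZ, ha⟩
          by_cases h : Z = C
          · rw [if_pos h] at ha
            rcases Finset.mem_insert.1 ha with rfl | ha
            · exact Finset.mem_insert_self a B
            · exact Finset.mem_insert_of_mem (hCe ha)
          · rw [if_neg h] at ha
            exact Finset.mem_insert_of_mem ((othersub Z hZ h).2 ha)
        · intro ha
          rcases Finset.mem_insert.1 ha with rfl | ha
          · exact ⟨C, hCL, by rw [if_pos rfl]; exact Finset.mem_insert_self a _⟩
          · have h2 : a ∈ insert x B := Finset.mem_insert_of_mem ha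
            rw [← hL.2.2] at h2
            obtain ⟨Z, hZ, haZ⟩ := mem_unionL.1 h2
            by_cases h : Z = C
            · refine ⟨C, hCL, ?_⟩
              rw [if_pos rfl]
              rw [h] at haZ
              refine Finset.mem_insert_of_mem (Finset.mem_erase.2 ⟨?_, haZ⟩)
              rintro rfl
              exact hxB ha
            · exact ⟨Z, hZ, by rw [if_neg h]; exact haZ⟩
      · have hyB : y ∉ B := fun h => absurd (hy y h) (lt_irrefl y)
        have e1 : sInf (↑(insert x B) : Set ℕ) = sInf (↑B : Set ℕ) := sInf_insert_of_gt hB hx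
        have e2 : sInf (↑(insert y B) : Set ℕ) = sInf (↑B : Set ℕ) := sInf_insert_of_gt hB hy
        have : L'.length = L.length := by simp [hL'def]
        omega

def EndMax (n : ℕ) (F : Finset ℕ) : Prop :=
  ∀ m, (∀ a ∈ F, a < m) → insert m F ∉ Schreier n

lemma exists_greedy {ν : ℕ} (hν : 1 ≤ ν) (F : Finset ℕ) (hF : F ∈ Schreier (ν + 1))
    (hne : F.Nonempty) :
    ∃ L, Decomp ν L F ∧ (∀ B ∈ L.dropLast, EndMax ν B) ∧
      (∀ L', Decomp ν L' F → L.length ≤ L'.length) := by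
  classical
  induction F using Finset.strongInduction with
  | _ F ih =>
  have hpos : ∀ a ∈ F, 1 ≤ a := fun a ha => mem_pos (by omega) hF ha
  have hminF := sInf_mem' hne
  set minF := sInf (↑F : Set ℕ) with hminFdef
  set T := F.filter (fun t => F.filter (· ≤ t) ∈ Schreier ν) with hTdef
  have hT : T.Nonempty := by
    refine ⟨minF, Finset.mem_filter.2 ⟨hminF, ?_⟩⟩
    have : F.filter (· ≤ minF) = {minF} := by
      ext a
      simp only [Finset.mem_filter, Finset.mem_singleton]
      constructor
      · rintro ⟨h1, h2⟩; have := sInf_le' h1; omega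
      · rintro rfl; exact ⟨hminF, le_refl _⟩
    rw [this]
    exact singleton_mem (hpos _ hminF)
  set ts := T.max' hT with htsdef
  have hts := Finset.mem_filter.1 (T.max'_mem hT)
  set B₁ := F.filter (· ≤ ts) with hB₁def
  set rest := F.filter (fun a => ¬ a ≤ ts) with hrestdef
  have hsplit : B₁ ∪ rest = F := Finset.filter_union_filter_not_eq _ F
  have hB₁mem : minF ∈ B₁ := Finset.mem_filter.2 ⟨hminF, sInf_le' hts.1⟩
  have hB₁ne : B₁.Nonempty := ⟨minF, hB₁mem⟩
  rcases rest.eq_empty_or_nonempty with hre | hre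
  · have hB₁F : B₁ = F := by rw [← hsplit, hre, Finset.union_empty]
    refine ⟨[F], ⟨?_, by simp, by simp⟩, by simp, ?_⟩
    · intro B hB
      simp only [List.mem_singleton] at hB
      subst hB
      exact ⟨hB₁F ▸ hts.2, hne⟩
    · intro L' hd'
      match L', hd' with
      | [], hd' => exact absurd (hne.mono (le_of_eq hd'.2.2.symm)) (by simp)
      | (C :: Cs), _ => simp
  · have hrsub : rest ⊆ F := Finset.filter_subset _ F
    have hrssub : rest ⊂ F := by
      refine Finset.ssubset_iff_of_subset hrsub |>.2 ⟨minF, hminF, ?_⟩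
      simp only [hrestdef, Finset.mem_filter, not_and, not_not]
      intro _
      exact sInf_le' hts.1
    have hrmem : rest ∈ Schreier (ν + 1) := hered _ hrsub hF
    obtain ⟨Lr, hdr, hendr, hminr⟩ := ih rest hrssub hrmem hre
    have hrestgt : ∀ a ∈ rest, ts < a := by
      intro a ha
      have := (Finset.mem_filter.1 ha).2
      omega
    -- B₁ is end-maximal
    have hB₁max : EndMax ν B₁ := by
      have hf : sInf (↑rest : Set ℕ) ∈ rest := sInf_mem' hre
      set f := sInf (↑rest : Set ℕ) with hfdef
      have hfF : f ∈ F := hrsub hf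
      have hfgt : ts < f := hrestgt f hf
      have hnot : insert f B₁ ∉ Schreier ν := by
        intro hcon
        have hfins : insert f B₁ = F.filter (· ≤ f) := by
          ext a
          simp only [Finset.mem_insert, hB₁def, Finset.mem_filter]
          constructor
          · rintro (rfl | ⟨h1, h2⟩)
            · exact ⟨hfF, le_refl _⟩
            · exact ⟨h1, by omega⟩
          · rintro ⟨h1, h2⟩
            by_cases h3 : a ≤ ts
            · exact Or.inr ⟨h1, h3⟩
            · left
              have h4 : a ∈ rest := Finset.mem_filter.2 ⟨h1, h3⟩
              have := sInf_le' h4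
              omega
        have hfT : f ∈ T := Finset.mem_filter.2 ⟨hfF, by rw [← hfins]; exact hcon⟩
        have := T.le_max' f hfT
        omega
      intro m' hm' hcon
      refine hnot (endext hB₁ne hm' (fun a ha => ?_) (hpos f hfF) hcon)
      have := (Finset.mem_filter.1 ha).2
      omega
    have hLrne : Lr ≠ [] := by
      rintro rfl
      rw [← hdr.2.2] at hre
      simp at hre
    refine ⟨B₁ :: Lr, ⟨?_, ?_, ?_⟩, ?_, ?_⟩
    · intro B hB
      rcases List.mem_cons.1 hB with rfl | hB
      · exact ⟨hts.2, hB₁ne⟩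
      · exact hdr.1 B hB
    · refine List.pairwise_cons.2 ⟨?_, hdr.2.1⟩
      intro Z hZ a ha b hb
      have hbrest : b ∈ rest := Decomp.subset hdr hZ hb
      have h1 := (Finset.mem_filter.1 ha).2
      have h2 := hrestgt b hbrest
      omega
    · rw [unionL_cons, hdr.2.2, hsplit]
    · rw [List.dropLast_cons_of_ne_nil hLrne]
      intro B hB
      rcases List.mem_cons.1 hB with rfl | hB
      · exact hB₁max
      · exact hendr B hB
    · intro L' hd'
      match L', hd' with
      | [], hd' => exact absurd (hne.mono (le_of_eq hd'.2.2.symm)) (by simp)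
      | (C :: Cs), hd' =>
        have hCne : C.Nonempty := (hd'.1 C (by simp)).2
        have hCS : C ∈ Schreier ν := (hd'.1 C (by simp)).1
        have hCpw := List.pairwise_cons.1 hd'.2.1
        have hCsubF : C ⊆ F := Decomp.subset hd' (by simp)
        set mC := C.max' hCne with hmCdef
        have hCfilter : C = F.filter (· ≤ mC) := by
          ext a
          simp only [Finset.mem_filter]
          constructor
          · intro ha
            exact ⟨hCsubF ha, C.le_max' a ha⟩
          · rintro ⟨h1, h2⟩
            rw [← hd'.2.2] at h1
            simp only [unionL_cons, Finset.mem_union] at h1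
            rcases h1 with h1 | h1
            · exact h1
            · exfalso
              obtain ⟨Z, hZ, haZ⟩ := mem_unionL.1 h1
              have := hCpw.1 Z hZ mC (C.max'_mem hCne) a haZ
              omega
        have hmCT : mC ∈ T := by
          refine Finset.mem_filter.2 ⟨hCsubF (C.max'_mem hCne), ?_⟩
          rw [← hCfilter]
          exact hCS
        have hmCle : mC ≤ ts := T.le_max' mC hmCT
        have hrsubCs : rest ⊆ unionL Cs := by
          intro a ha
          have haF : a ∈ F := hrsub ha
          rw [← hd'.2.2] at haF
          simp only [unionL_cons, Finset.mem_union] at haF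
          rcases haF with h | h
          · exfalso
            have := C.le_max' a h
            have := hrestgt a ha
            omega
          · exact h
        have hdCs : Decomp ν Cs (unionL Cs) :=
          ⟨fun Z hZ => hd'.1 Z (List.mem_cons_of_mem _ hZ), hCpw.2, rfl⟩
        obtain ⟨L'', hd'', hlen''⟩ := decomp_restrict (fun {G' F'} h1 h2 => hered ν h1 h2)
          hdCs hrsubCs
        have := hminr L'' hd''
        simp only [List.length_cons]
        omega

lemma exists_maximal_decomp {ν : ℕ} (hν : 1 ≤ ν) {F : Finset ℕ} (hF : F ∈ Schreier (ν + 1))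
    (hne : F.Nonempty) (hmax : EndMax (ν + 1) F) :
    ∃ L, Decomp ν L F ∧ (∀ B ∈ L, EndMax ν B) ∧ L.length = sInf (↑F : Set ℕ) := by
  obtain ⟨L, hd, hend, hminl⟩ := exists_greedy hν F hF hne
  have hpos : ∀ a ∈ F, 1 ≤ a := fun a ha => mem_pos (by omega) hF ha
  have hLne : L ≠ [] := by
    rintro rfl
    rw [← hd.2.2] at hne
    simp at hne
  -- length ≤ sInf F
  have hlen_le : L.length ≤ sInf (↑F : Set ℕ) := by
    rw [schreier_iff (n := ν + 1) (by omega)] at hF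
    rcases hF with h | ⟨L₀, hd₀, hlen₀⟩
    · exact absurd h (Finset.nonempty_iff_ne_empty.1 hne)
    · exact le_trans (hminl L₀ hd₀) hlen₀
  have hmaxF := F.max'_mem hne
  have hsInf_lt : ∀ a ∈ F, a < F.max' hne + 1 := fun a ha => by
    have := F.le_max' a ha; omega
  -- length = sInf F
  have hlen_eq : L.length = sInf (↑F : Set ℕ) := by
    by_contra hcon
    have hlt : L.length < sInf (↑F : Set ℕ) := lt_of_le_of_ne hlen_le hcon
    set m' := F.max' hne + 1 with hm'def
    refine hmax m' hsInf_lt ?_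
    rw [schreier_iff (by omega)]
    refine Or.inr ⟨L ++ [{m'}], ⟨?_, ?_, ?_⟩, ?_⟩
    · intro B hB
      rcases List.mem_append.1 hB with hB | hB
      · exact hd.1 B hB
      · simp only [List.mem_singleton] at hB
        subst hB
        exact ⟨singleton_mem (by omega), Finset.singleton_nonempty _⟩
    · refine List.pairwise_append.2 ⟨hd.2.1, by simp, ?_⟩
      intro Z hZ b hb
      simp only [List.mem_singleton] at hb
      subst hb
      intro a ha c hc
      simp only [Finset.mem_singleton] at hc
      subst hc
      exact hsInf_lt a (Decomp.subset hd hZ ha)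
    · rw [unionL_append, hd.2.2]
      ext a
      simp only [Finset.mem_union, unionL_cons, unionL_nil, Finset.union_empty,
        Finset.mem_singleton, Finset.mem_insert]
      tauto
    · have h1 : sInf (↑(insert m' F) : Set ℕ) = sInf (↑F : Set ℕ) :=
        sInf_insert_of_gt hne hsInf_lt
      simp only [List.length_append, List.length_cons, List.length_nil, h1]
      omega
  -- the last block is end-maximal
  set Bl := L.getLast hLne with hBldef
  have heq : L.dropLast ++ [Bl] = L := List.dropLast_append_getLast hLne
  have hBlL : Bl ∈ L := List.getLast_mem hLne
  have hpwsplit : ∀ Z ∈ L.dropLast, FinsetLT Z Bl := by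
    have := hd.2.1
    rw [← heq] at this
    have h2 := List.pairwise_append.1 this
    intro Z hZ
    exact h2.2.2 Z hZ Bl (by simp)
  have hmaxFBl : F.max' hne ∈ Bl := by
    have : F.max' hne ∈ unionL L := by rw [hd.2.2]; exact hmaxF
    obtain ⟨Z, hZ, hmz⟩ := mem_unionL.1 this
    rcases List.mem_append.1 (by rw [heq]; exact hZ : Z ∈ L.dropLast ++ [Bl]) with h | h
    · exfalso
      obtain ⟨b, hb⟩ := (hd.1 Bl hBlL).2
      have h1 := hpwsplit Z h (F.max' hne) hmz b hb
      have := F.le_max' b (Decomp.subset hd hBlL hb)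
      omega
    · simp only [List.mem_singleton] at h
      subst h
      exact hmz
  have hBlmax : EndMax ν Bl := by
    intro m' hm' hcon
    have hm'F : ∀ a ∈ F, a < m' := by
      intro a ha
      have h1 := F.le_max' a ha
      have h2 := hm' _ hmaxFBl
      omega
    refine hmax m' hm'F ?_
    rw [schreier_iff (by omega)]
    refine Or.inr ⟨L.dropLast ++ [insert m' Bl], ⟨?_, ?_, ?_⟩, ?_⟩
    · intro B hB
      rcases List.mem_append.1 hB with hB | hB
      · exact hd.1 B (List.dropLast_sublist L |>.mem hB)
      · simp only [List.mem_singleton] at hB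
        subst hB
        exact ⟨hcon, ⟨m', Finset.mem_insert_self _ _⟩⟩
    · refine List.pairwise_append.2 ⟨?_, by simp, ?_⟩
      · exact List.Pairwise.sublist (List.dropLast_sublist L) hd.2.1
      · intro Z hZ b hb
        simp only [List.mem_singleton] at hb
        subst hb
        intro a ha c hc
        rcases Finset.mem_insert.1 hc with rfl | hc
        · exact hm'F a (Decomp.subset hd (List.dropLast_sublist L |>.mem hZ) ha)
        · exact hpwsplit Z hZ a ha c hc
    · have hun : unionL L.dropLast ∪ Bl = F := by
        rw [← hd.2.2, ← heq, unionL_append]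
        simp
      ext a
      rw [unionL_append]
      simp only [Finset.mem_union, unionL_cons, unionL_nil, Finset.union_empty,
        Finset.mem_insert]
      rw [← hun]
      simp only [Finset.mem_union]
      tauto
    · have h1 : sInf (↑(insert m' F) : Set ℕ) = sInf (↑F : Set ℕ) :=
        sInf_insert_of_gt hne hm'F
      have h2 : L.dropLast.length = L.length - 1 := by simp
      have h3 : 1 ≤ L.length := List.length_pos_iff.2 hLne
      simp only [List.length_append, List.length_cons, List.length_nil, h1, h2]
      omega
  refine ⟨L, hd, ?_, hlen_eq⟩
  intro B hB
  rcases List.mem_append.1 (by rw [heq]; exact hB : B ∈ L.dropLast ++ [Bl]) with h | h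
  · exact hend B h
  · simp only [List.mem_singleton] at h
    subst h
    exact hBlmax

lemma main_lemma : ∀ n : ℕ, 1 ≤ n → ∀ F : Finset ℕ, F ∈ Schreier n → F.Nonempty →
    EndMax n F →
    ∃ x : ℕ →₀ ℝ, x.support = F ∧ (∀ k, 0 ≤ x k) ∧ (∑ k ∈ F, x k) = 1 ∧
      ∀ G ∈ Schreier (n - 1), (∑ k ∈ G, x k) ≤
        (2 ^ n - 1 : ℝ) / (↑(sInf (↑F : Set ℕ)) : ℝ) := by
  intro n hn
  induction n, hn using Nat.le_induction with
  | base =>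
    intro F hF hne hmax
    classical
    have hcard_le : F.card ≤ sInf (↑F : Set ℕ) := hF _ (sInf_mem' hne)
    have hsle : sInf (↑F : Set ℕ) ≤ F.max' hne := F.le_max' _ (sInf_mem' hne)
    have hcard_eq : F.card = sInf (↑F : Set ℕ) := by
      by_contra hcon
      set m' := F.max' hne + 1 with hm'def
      have hm' : ∀ a ∈ F, a < m' := fun a ha => by
        have := F.le_max' a ha; omega
      have h2 := hmax m' hm'
      have hm'F : m' ∉ F := fun h => absurd (hm' m' h) (lt_irrefl m')
      rw [show Schreier 1 = SchreierOne from rfl] at h2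
      simp only [SchreierOne, Set.mem_setOf_eq, not_forall] at h2
      obtain ⟨k, hk, hlt⟩ := h2
      rw [Finset.card_insert_of_notMem hm'F] at hlt
      rcases Finset.mem_insert.1 hk with rfl | hk
      · omega
      · have := sInf_le' hk
        omega
    have hcpos : 0 < F.card := Finset.card_pos.2 hne
    have hcR : (0 : ℝ) < (F.card : ℝ) := by exact_mod_cast hcpos
    set x : ℕ →₀ ℝ := Finsupp.onFinset F (fun a => if a ∈ F then ((F.card : ℝ))⁻¹ else 0)
      (fun a ha => by by_contra h; simp [h] at ha) with hxdef
    have hxapp : ∀ a, x a = if a ∈ F then ((F.card : ℝ))⁻¹ else 0 := fun a => rfl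
    refine ⟨x, ?_, ?_, ?_, ?_⟩
    · ext a
      rw [Finsupp.mem_support_iff, hxapp]
      by_cases h : a ∈ F
      · rw [if_pos h]
        simp only [h, iff_true]
        positivity
      · rw [if_neg h]
        simp [h]
    · intro k
      rw [hxapp]
      by_cases h : k ∈ F
      · rw [if_pos h]; positivity
      · rw [if_neg h]
    · have : ∀ k ∈ F, x k = ((F.card : ℝ))⁻¹ := fun k hk => by rw [hxapp, if_pos hk]
      rw [Finset.sum_congr rfl this, Finset.sum_const, nsmul_eq_mul]
      field_simp
    · intro G hG
      have hG1 : G.card ≤ 1 := hG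
      have hterm : ∀ k ∈ G, x k ≤ ((F.card : ℝ))⁻¹ := by
        intro k _
        rw [hxapp]
        by_cases h : k ∈ F
        · rw [if_pos h]
        · rw [if_neg h]; positivity
      calc (∑ k ∈ G, x k) ≤ G.card • ((F.card : ℝ))⁻¹ := Finset.sum_le_card_nsmul G _ _ hterm
        _ ≤ 1 * ((F.card : ℝ))⁻¹ := by
            rw [nsmul_eq_mul]
            apply mul_le_mul_of_nonneg_right _ (by positivity)
            exact_mod_cast hG1
        _ = (2 ^ 1 - 1 : ℝ) / (↑(sInf (↑F : Set ℕ)) : ℝ) := by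
            rw [← hcard_eq]
            norm_num
  | succ n hn1 ih =>
    intro F hF hne hmax
    classical
    have hm1 : 1 ≤ sInf (↑F : Set ℕ) := mem_pos (by omega) hF (sInf_mem' hne)
    set m := sInf (↑F : Set ℕ) with hmdef
    have hmR : (0:ℝ) < (m:ℝ) := by exact_mod_cast hm1
    obtain ⟨L, hd, hEnd, hlen⟩ := exists_maximal_decomp hn1 hF hne hmax
    set d := L.length with hddef
    have hex : ∀ i : Fin d, ∃ y : ℕ →₀ ℝ, y.support = L.get i ∧ (∀ k, 0 ≤ y k) ∧
        (∑ k ∈ L.get i, y k) = 1 ∧ ∀ G ∈ Schreier (n - 1), (∑ k ∈ G, y k) ≤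
          (2 ^ n - 1 : ℝ) / (↑(sInf (↑(L.get i) : Set ℕ)) : ℝ) :=
      fun i => ih (L.get i) (hd.1 _ (L.get_mem i)).1 (hd.1 _ (L.get_mem i)).2
        (hEnd _ (L.get_mem i))
    choose xs hsupp hposx hsum1 hboundx using hex
    set x : ℕ →₀ ℝ := ((m : ℝ))⁻¹ • ∑ i : Fin d, xs i with hxdef
    have hxapp : ∀ k, x k = ((m:ℝ))⁻¹ * ∑ i : Fin d, xs i k := by
      intro k
      rw [hxdef, Finsupp.smul_apply, Finsupp.finset_sum_apply, smul_eq_mul]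
    have hmemF : ∀ k, k ∈ F ↔ ∃ i : Fin d, k ∈ L.get i := by
      intro k
      rw [← hd.2.2, mem_unionL]
      constructor
      · rintro ⟨B, hB, hk⟩
        obtain ⟨i, rfl⟩ := List.mem_iff_get.1 hB
        exact ⟨i, hk⟩
      · rintro ⟨i, hk⟩
        exact ⟨L.get i, L.get_mem i, hk⟩
    have hsupx : x.support = F := by
      ext k
      rw [Finsupp.mem_support_iff, hxapp, hmemF]
      constructor
      · intro h
        by_contra hcon
        push_neg at hcon
        refine h ?_
        have hz : ∀ i ∈ (Finset.univ : Finset (Fin d)), xs i k = 0 := fun i _ => by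
          by_contra h0
          exact (hcon i) ((hsupp i) ▸ Finsupp.mem_support_iff.2 h0)
        rw [Finset.sum_eq_zero hz, mul_zero]
      · rintro ⟨i, hk⟩
        have hpos : 0 < xs i k :=
          lt_of_le_of_ne (hposx i k)
            (Ne.symm (Finsupp.mem_support_iff.1 ((hsupp i).symm ▸ hk)))
        have hsp : 0 < ∑ i : Fin d, xs i k :=
          Finset.sum_pos' (fun j _ => hposx j k) ⟨i, Finset.mem_univ i, hpos⟩
        exact ne_of_gt (mul_pos (inv_pos.2 hmR) hsp)
    have hxnn : ∀ k, 0 ≤ x k := by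
      intro k
      rw [hxapp]
      exact mul_nonneg (by positivity) (Finset.sum_nonneg (fun i _ => hposx i k))
    have hsumF : ∀ i : Fin d, ∑ k ∈ F, xs i k = 1 := by
      intro i
      rw [← hsum1 i]
      refine (Finset.sum_subset (Decomp.subset hd (L.get_mem i)) ?_).symm
      intro k _ hk
      exact Finsupp.notMem_support_iff.1 ((hsupp i) ▸ hk)
    have hswap : ∀ (G : Finset ℕ), ∑ k ∈ G, x k = ((m:ℝ))⁻¹ * ∑ i : Fin d, ∑ k ∈ G, xs i k := by
      intro G
      calc ∑ k ∈ G, x k = ∑ k ∈ G, ((m:ℝ))⁻¹ * ∑ i : Fin d, xs i k :=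
            Finset.sum_congr rfl (fun k _ => hxapp k)
        _ = ((m:ℝ))⁻¹ * ∑ k ∈ G, ∑ i : Fin d, xs i k := by rw [Finset.mul_sum]
        _ = ((m:ℝ))⁻¹ * ∑ i : Fin d, ∑ k ∈ G, xs i k := by rw [Finset.sum_comm]
    have hdm : d = m := hlen
    refine ⟨x, hsupx, hxnn, ?_, ?_⟩
    · rw [hswap F, Finset.sum_congr rfl (fun i _ => hsumF i), Finset.sum_const,
        Finset.card_univ, Fintype.card_fin, nsmul_eq_mul, hdm]
      field_simp
    · intro G hG
      rw [Nat.add_sub_cancel] at hG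
      have hRHSnn : (0:ℝ) ≤ (2 ^ (n+1) - 1 : ℝ) / (m : ℝ) := by
        apply div_nonneg _ (le_of_lt hmR)
        have h1 : (1:ℝ) ≤ 2 ^ (n+1) := one_le_pow₀ (by norm_num)
        linarith
      set t : Fin d → ℝ := fun i => ∑ k ∈ G, xs i k with htdef
      have htnn : ∀ i, 0 ≤ t i := fun i => Finset.sum_nonneg (fun k _ => hposx i k)
      have hti : ∀ i, t i = ∑ k ∈ G ∩ L.get i, xs i k := by
        intro i
        refine (Finset.sum_subset Finset.inter_subset_left ?_).symm
        intro k hkG hk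
        have : k ∉ L.get i := fun h => hk (Finset.mem_inter.2 ⟨hkG, h⟩)
        exact Finsupp.notMem_support_iff.1 ((hsupp i) ▸ this)
      have hgoal_eq : ∑ k ∈ G, x k = ((m:ℝ))⁻¹ * ∑ i : Fin d, t i := hswap G
      by_cases hS0 : ∃ i : Fin d, (G ∩ L.get i).Nonempty
      swap
      · push_neg at hS0
        have : ∀ i ∈ (Finset.univ : Finset (Fin d)), t i = 0 := by
          intro i _
          rw [hti i, hS0 i, Finset.sum_empty]
        rw [hgoal_eq, Finset.sum_eq_zero this, mul_zero]
        exact hRHSnn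
      · set S := Finset.univ.filter (fun i : Fin d => (G ∩ L.get i).Nonempty) with hSdef
        have hSne : S.Nonempty := by
          obtain ⟨i, hi⟩ := hS0
          exact ⟨i, Finset.mem_filter.2 ⟨Finset.mem_univ i, hi⟩⟩
        set i₀ := S.min' hSne with hi₀def
        have hi₀S := Finset.mem_filter.1 (S.min'_mem hSne)
        obtain ⟨g₀, hg₀⟩ := hi₀S.2
        have hg₀G : g₀ ∈ G := (Finset.mem_inter.1 hg₀).1
        have hg₀B : g₀ ∈ L.get i₀ := (Finset.mem_inter.1 hg₀).2
        have hGne : G.Nonempty := ⟨g₀, hg₀G⟩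
        rw [schreier_iff hn1] at hG
        rcases hG with h | ⟨P, hdP, hlP⟩
        · exact absurd h (Finset.nonempty_iff_ne_empty.1 hGne)
        set l := P.length with hldef
        set Mstar : ℕ := max m (l + 1) with hMdef
        have hMpos : 0 < Mstar := by omega
        have hMR : (0:ℝ) < (Mstar : ℝ) := by exact_mod_cast hMpos
        set Q : ℝ := (2 ^ n - 1 : ℝ) / (Mstar : ℝ) with hQdef
        have h2n : (0:ℝ) ≤ (2 ^ n - 1 : ℝ) := by
          have : (1:ℝ) ≤ 2 ^ n := one_le_pow₀ (by norm_num)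
          linarith
        have hQnn : 0 ≤ Q := div_nonneg h2n (le_of_lt hMR)
        have hpw := List.pairwise_iff_get.1 hd.2.1
        have hpwP := List.pairwise_iff_get.1 hdP.2.1
        have hPget : ∀ j : Fin l, (P.get j ∈ Schreier (n - 1) ∧ (P.get j).Nonempty) :=
          fun j => hdP.1 _ (P.get_mem j)
        -- piece decomposition of t i
        set s2 : Fin d → Fin l → ℝ := fun i j => ∑ k ∈ P.get j ∩ L.get i, xs i k with hs2def
        have hts : ∀ i : Fin d, t i = ∑ j : Fin l, s2 i j := by
          intro i
          rw [hti i]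
          have hbi : G ∩ L.get i = Finset.univ.biUnion (fun j : Fin l => P.get j ∩ L.get i) := by
            ext a
            simp only [Finset.mem_inter, Finset.mem_biUnion, Finset.mem_univ, true_and]
            constructor
            · rintro ⟨haG, haB⟩
              rw [← hdP.2.2] at haG
              obtain ⟨Z, hZ, haZ⟩ := mem_unionL.1 haG
              obtain ⟨j, rfl⟩ := List.mem_iff_get.1 hZ
              exact ⟨j, haZ, haB⟩
            · rintro ⟨j, haP, haB⟩
              refine ⟨?_, haB⟩
              rw [← hdP.2.2]
              exact mem_unionL.2 ⟨P.get j, P.get_mem j, haP⟩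
          have hdisj : Set.PairwiseDisjoint ↑(Finset.univ : Finset (Fin l))
              (fun j => P.get j ∩ L.get i) := by
            intro j _ j' _ hjj'
            simp only [Function.onFun]
            rw [Finset.disjoint_left]
            intro a ha ha'
            have haj := (Finset.mem_inter.1 ha).1
            have haj' := (Finset.mem_inter.1 ha').1
            rcases lt_or_gt_of_ne hjj' with h | h
            · exact absurd (hpwP j j' h a haj a haj') (lt_irrefl a)
            · exact absurd (hpwP j' j h a haj' a haj) (lt_irrefl a)
          rw [hbi, Finset.sum_biUnion hdisj]
        -- the key bound for pieces in later blocks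
        have hmain : ∀ i : Fin d, i₀ < i → ∀ j : Fin l, (P.get j ∩ L.get i).Nonempty →
            s2 i j ≤ Q := by
          intro i hi j hnej
          have hBine : (L.get i).Nonempty := (hd.1 _ (L.get_mem i)).2
          have hpiece : P.get j ∩ L.get i ∈ Schreier (n - 1) :=
            hered (n - 1) Finset.inter_subset_left (hPget j).1
          have hb1 := hboundx i _ hpiece
          have hsinf1 : m ≤ sInf (↑(L.get i) : Set ℕ) :=
            sInf_mono' (Decomp.subset hd (L.get_mem i)) hBine
          have hsinf2 : l + 1 ≤ sInf (↑(L.get i) : Set ℕ) := by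
            have h1 : l ≤ sInf (↑G : Set ℕ) := hlP
            have h2 : sInf (↑G : Set ℕ) ≤ g₀ := sInf_le' hg₀G
            have h3 : g₀ < sInf (↑(L.get i) : Set ℕ) :=
              hpw i₀ i hi g₀ hg₀B _ (sInf_mem' hBine)
            omega
          have hMle : Mstar ≤ sInf (↑(L.get i) : Set ℕ) := by omega
          refine le_trans hb1 ?_
          rw [hQdef]
          apply div_le_div_of_nonneg_left h2n hMR
          exact_mod_cast hMle
        -- counting pairs
        set Pairs : Finset (Fin d × Fin l) :=
          Finset.univ.filter
            (fun p : Fin d × Fin l => i₀ < p.1 ∧ (P.get p.2 ∩ L.get p.1).Nonempty) with hPairs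
        have hcount : Pairs.card ≤ d + l := by
          have hinj : Set.InjOn
              (fun p : Fin d × Fin l =>
                if ∃ j' : Fin l, p.2 < j' ∧ (P.get j' ∩ L.get p.1).Nonempty
                then (Sum.inr p.2 : Fin d ⊕ Fin l) else Sum.inl p.1) ↑Pairs := by
            intro p hp q hq hfq
            simp only [Finset.coe_filter, Set.mem_setOf_eq, Finset.mem_univ, true_and,
              hPairs] at hp hq
            simp only at hfq
            by_cases cp : ∃ j' : Fin l, p.2 < j' ∧ (P.get j' ∩ L.get p.1).Nonempty
            · by_cases cq : ∃ j' : Fin l, q.2 < j' ∧ (P.get j' ∩ L.get q.1).Nonempty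
              · rw [if_pos cp, if_pos cq] at hfq
                have h22 : p.2 = q.2 := by simpa using hfq
                have h11 : p.1 = q.1 := by
                  by_contra hne'
                  rcases lt_or_gt_of_ne hne' with h | h
                  · obtain ⟨j', hj'1, z, hz⟩ := cp
                    obtain ⟨y, hy⟩ := hq.2
                    rw [← h22] at hy
                    have hyz : y < z := hpwP p.2 j' hj'1 y (Finset.mem_inter.1 hy).1
                      z (Finset.mem_inter.1 hz).1
                    have hzy : z < y := hpw p.1 q.1 h z (Finset.mem_inter.1 hz).2
                      y (Finset.mem_inter.1 hy).2
                    omega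
                  · obtain ⟨j', hj'1, z, hz⟩ := cq
                    obtain ⟨y, hy⟩ := hp.2
                    rw [h22] at hy
                    have hyz : y < z := hpwP q.2 j' hj'1 y (Finset.mem_inter.1 hy).1
                      z (Finset.mem_inter.1 hz).1
                    have hzy : z < y := hpw q.1 p.1 h z (Finset.mem_inter.1 hz).2
                      y (Finset.mem_inter.1 hy).2
                    omega
                exact Prod.ext h11 h22
              · rw [if_pos cp, if_neg cq] at hfq
                exact absurd hfq (by simp)
            · by_cases cq : ∃ j' : Fin l, q.2 < j' ∧ (P.get j' ∩ L.get q.1).Nonempty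
              · rw [if_neg cp, if_pos cq] at hfq
                exact absurd hfq (by simp)
              · rw [if_neg cp, if_neg cq] at hfq
                have h11 : p.1 = q.1 := by simpa using hfq
                have h22 : p.2 = q.2 := by
                  by_contra hne'
                  rcases lt_or_gt_of_ne hne' with h | h
                  · exact cp ⟨q.2, h, by rw [h11]; exact hq.2⟩
                  · exact cq ⟨p.2, h, by rw [← h11]; exact hp.2⟩
                exact Prod.ext h11 h22
          have := Finset.card_le_card_of_injOn _ (fun p _ => Finset.mem_univ _) hinj
          simpa using this
        -- sum over later blocks
        have hpair_sum : ∑ i ∈ Finset.univ.erase i₀, t i ≤ (Pairs.card : ℝ) * Q := by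
          have hstep1 : ∀ i ∈ Finset.univ.erase i₀, t i ≤
              ∑ j : Fin l, (if i₀ < i ∧ (P.get j ∩ L.get i).Nonempty then Q else 0) := by
            intro i hi
            have hine : i ≠ i₀ := (Finset.mem_erase.1 hi).1
            rw [hts i]
            refine Finset.sum_le_sum ?_
            intro j _
            by_cases hnej : (P.get j ∩ L.get i).Nonempty
            · by_cases hii : i₀ < i
              · rw [if_pos ⟨hii, hnej⟩]
                exact hmain i hii j hnej
              · exfalso
                have hiS : i ∈ S := by
                  refine Finset.mem_filter.2 ⟨Finset.mem_univ i, ?_⟩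
                  obtain ⟨a, ha⟩ := hnej
                  refine ⟨a, Finset.mem_inter.2 ⟨?_, (Finset.mem_inter.1 ha).2⟩⟩
                  rw [← hdP.2.2]
                  exact mem_unionL.2 ⟨P.get j, P.get_mem j, (Finset.mem_inter.1 ha).1⟩
                have := S.min'_le i hiS
                rcases lt_or_eq_of_le this with h | h
                · exact hii h
                · exact hine h.symm
            · rw [if_neg (by tauto)]
              have : P.get j ∩ L.get i = ∅ := Finset.not_nonempty_iff_eq_empty.1 hnej
              rw [hs2def]
              simp only [this, Finset.sum_empty]
              exact le_refl 0
          have hstep2 : ∑ i ∈ Finset.univ.erase i₀, t i ≤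
              ∑ i : Fin d, ∑ j : Fin l,
                (if i₀ < i ∧ (P.get j ∩ L.get i).Nonempty then Q else 0) := by
            refine le_trans (Finset.sum_le_sum hstep1) ?_
            refine Finset.sum_le_sum_of_subset_of_nonneg (Finset.subset_univ _) ?_
            intro i _ _
            refine Finset.sum_nonneg (fun j _ => ?_)
            split
            · exact hQnn
            · exact le_refl 0
          refine le_trans hstep2 ?_
          have hrw : ∑ p ∈ Pairs, Q = ∑ i : Fin d, ∑ j : Fin l,
              (if i₀ < i ∧ (P.get j ∩ L.get i).Nonempty then Q else 0) := by
            rw [hPairs, Finset.sum_filter, Fintype.sum_prod_type]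
          rw [← hrw, Finset.sum_const, nsmul_eq_mul]
        have hti₀ : t i₀ ≤ 1 := by
          rw [hti i₀]
          calc ∑ k ∈ G ∩ L.get i₀, xs i₀ k ≤ ∑ k ∈ L.get i₀, xs i₀ k :=
                Finset.sum_le_sum_of_subset_of_nonneg Finset.inter_subset_right
                  (fun k _ _ => hposx i₀ k)
            _ = 1 := hsum1 i₀
        have hsplit : ∑ i : Fin d, t i = t i₀ + ∑ i ∈ Finset.univ.erase i₀, t i :=
          (Finset.add_sum_erase _ _ (Finset.mem_univ i₀)).symm
        have hdl_le : (Pairs.card : ℝ) * Q ≤ 2 * (2 ^ n - 1 : ℝ) := by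
          have h1 : ((Pairs.card : ℕ) : ℝ) ≤ ((2 * Mstar : ℕ) : ℝ) := by
            have : Pairs.card ≤ 2 * Mstar := by
              have hdM : d ≤ Mstar := by omega
              omega
            exact_mod_cast this
          calc (Pairs.card : ℝ) * Q ≤ ((2 * Mstar : ℕ) : ℝ) * Q :=
                mul_le_mul_of_nonneg_right h1 hQnn
            _ = 2 * (2 ^ n - 1 : ℝ) := by
                rw [hQdef]
                push_cast
                field_simp
        have htotal : ∑ i : Fin d, t i ≤ 2 ^ (n + 1) - 1 := by
          rw [hsplit]
          have : (1:ℝ) + 2 * (2 ^ n - 1) = 2 ^ (n+1) - 1 := by ring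
          linarith [le_trans hpair_sum hdl_le]
        rw [hgoal_eq]
        rw [div_eq_inv_mul]
        exact mul_le_mul_of_nonneg_left htotal (by positivity)

end SchAux

/-- for `M ⊆ ℕ` infinite, `n ≥ 1`, `ε > 0`, there is `k ∈ ℕ` such that every
finite `F ⊆ M` that is maximal in `S_n` and satisfies `k ≤ min F` supports an
`(n, ε)`-basic special convex combination. -/
theorem stmt_8 (M : Set ℕ) (hM : M.Infinite) (n : ℕ) (hn : 1 ≤ n) (ε : ℝ) (hε : 0 < ε) :
    ∃ k : ℕ, ∀ F : Finset ℕ, ↑F ⊆ M → F ∈ Schreier n →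
      (∀ m : ℕ, (∀ a ∈ F, a < m) → insert m F ∉ Schreier n) →
      (∀ a ∈ F, k ≤ a) →
      ∃ x : ℕ →₀ ℝ, IsBSCCVec n ε x ∧ x.support = F := by

  refine ⟨⌈((2:ℝ) ^ n - 1) / ε⌉₊ + 1, ?_⟩
  set k0 : ℕ := ⌈((2:ℝ) ^ n - 1) / ε⌉₊ + 1 with hk0def
  intro F hFM hFS hFmax hFk
  have hFne : F.Nonempty := by
    rcases F.eq_empty_or_nonempty with rfl | h
    · exfalso
      refine hFmax 1 (by simp) ?_
      simpa using (SchAux.singleton_mem (n := n) (le_refl 1))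
    · exact h
  obtain ⟨x, hsupp, hpos, hsum, hbound⟩ := SchAux.main_lemma n hn F hFS hFne hFmax
  have hmk : k0 ≤ sInf (↑F : Set ℕ) := hFk _ (SchAux.sInf_mem' hFne)
  have hs0 : (0:ℝ) < ((sInf (↑F : Set ℕ) : ℕ) : ℝ) := by
    have : 1 ≤ sInf (↑F : Set ℕ) := by omega
    exact_mod_cast this
  have hlt : ((2:ℝ) ^ n - 1) / ((sInf (↑F : Set ℕ) : ℕ) : ℝ) < ε := by
    rw [div_lt_iff₀ hs0]
    have hA : ((2:ℝ) ^ n - 1) / ε < (k0 : ℝ) := by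
      have he : (k0:ℝ) = (⌈((2:ℝ) ^ n - 1) / ε⌉₊ : ℝ) + 1 := by rw [hk0def]; push_cast; ring
      have := Nat.le_ceil (((2:ℝ) ^ n - 1) / ε)
      linarith
    have hB : ((2:ℝ) ^ n - 1) < (k0 : ℝ) * ε := (div_lt_iff₀ hε).1 hA
    have hC : ((k0 : ℕ) : ℝ) ≤ ((sInf (↑F : Set ℕ) : ℕ) : ℝ) := by exact_mod_cast hmk
    calc ((2:ℝ) ^ n - 1) < (k0 : ℝ) * ε := hB
      _ ≤ ((sInf (↑F : Set ℕ) : ℕ) : ℝ) * ε := mul_le_mul_of_nonneg_right hC hε.le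
      _ = ε * ((sInf (↑F : Set ℕ) : ℕ) : ℝ) := mul_comm _ _
  refine ⟨x, ⟨hpos, by rw [hsupp]; exact hsum, by rw [hsupp]; exact hFS, ?_⟩, hsupp⟩
  intro G _ hG
  exact lt_of_le_of_lt (hbound G hG) hlt
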